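/- For every string s ∈ Σ*, every nonterminal A of G, and every integer l ≥ 0: there exists a derivation A ⇒* s in the augmented grammar G_e of score at most l if and only if there exists a string s' ∈ Σ* with A ⇒* s' in G and d_ed(s, s') ≤ l. Consequently, the minimum score of any derivation A ⇒* s in G_e equals min{ d_ed(s, s') : A ⇒* s' in G }, and when A = S this minimum equals the language edit distance d_G(G,s). -/

import Mathlib

/-- A scored production of a grammar: a left-hand-side nonterminal, a right-hand-side
string of nonterminals and terminals, and a score (edit cost). -/
structure ScoredProd (N : Type*) (T : Type*) where
  lhs : N
  rhs : List (N ⊕ T)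
  score : ℕ

/-- `ScoredDerives P u v c` : from the sentential form `u` one can derive the sentential
form `v` using productions from `P` whose scores sum to `c`. -/
inductive ScoredDerives {N T : Type*} (P : Set (ScoredProd N T)) :
    List (N ⊕ T) → List (N ⊕ T) → ℕ → Prop
  | refl (w : List (N ⊕ T)) : ScoredDerives P w w 0
  | step {u l r : List (N ⊕ T)} {p : ScoredProd N T} {c : ℕ} :
      ScoredDerives P u (l ++ [Sum.inl p.lhs] ++ r) c → p ∈ P →
      ScoredDerives P u (l ++ p.rhs ++ r) (c + p.score)

/-- A context-free grammar in Chomsky normal form: binary rules `A → BC`,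
terminal rules `A → a`, and possibly the rule `S → ε` (recorded by `eps`). -/
structure CNF (N : Type*) (T : Type*) where
  start : N
  bin : Set (N × N × N)
  term : Set (N × T)
  eps : Prop

/-- The productions of the CNF grammar `G`, all of score `0`. -/
def CNF.prods {N T : Type*} (G : CNF N T) : Set (ScoredProd N T) :=
  {p | (∃ A B C, (A, B, C) ∈ G.bin ∧ p = ⟨A, [Sum.inl B, Sum.inl C], 0⟩) ∨
       (∃ A a, (A, a) ∈ G.term ∧ p = ⟨A, [Sum.inr a], 0⟩) ∨
       (G.eps ∧ p = ⟨G.start, [], 0⟩)}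

/-- Lift a production of `G` to the augmented grammar `G_e`, whose nonterminals are
`N ⊕ Unit` (with `Sum.inr ()` playing the role of the fresh nonterminal `I`). -/
def liftProd {N T : Type*} (p : ScoredProd N T) : ScoredProd (N ⊕ Unit) T :=
  ⟨Sum.inl p.lhs, p.rhs.map (Sum.map Sum.inl id), p.score⟩

/-- The productions of the augmented grammar `G_e`: the original productions of `G`
(score 0), elementary substitution rules `A → y` of score 1 (for `A` having some
terminal rule and `y` with `A → y ∉ P`), elementary insertion rules `I → x` of score 1,
rules `A → IA`, `A → AI` of score 0, `I → II` of score 0, and elementary deletion rules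
`A → ε` of score 1 for every terminal rule `A → x` of `G`. -/
def CNF.augProds {N T : Type*} (G : CNF N T) : Set (ScoredProd (N ⊕ Unit) T) :=
  (liftProd '' G.prods) ∪
  {p | ∃ A y, (∃ x, (A, x) ∈ G.term) ∧ (A, y) ∉ G.term ∧
        p = ⟨Sum.inl A, [Sum.inr y], 1⟩} ∪
  {p | ∃ x, p = ⟨Sum.inr (), [Sum.inr x], 1⟩} ∪
  {p | ∃ A : N, p = ⟨Sum.inl A, [Sum.inl (Sum.inr ()), Sum.inl (Sum.inl A)], 0⟩ ∨
                p = ⟨Sum.inl A, [Sum.inl (Sum.inl A), Sum.inl (Sum.inr ())], 0⟩} ∪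
  {(⟨Sum.inr (), [Sum.inl (Sum.inr ()), Sum.inl (Sum.inr ())], 0⟩ : ScoredProd (N ⊕ Unit) T)} ∪
  {p | ∃ A x, (A, x) ∈ G.term ∧ p = ⟨Sum.inl A, [], 1⟩}

/-- `A ⇒* s` in the grammar `G`. -/
def CNF.Derives {N T : Type*} (G : CNF N T) (A : N) (s : List T) : Prop :=
  ∃ u, ScoredDerives G.prods [Sum.inl A] (s.map Sum.inr) u

/-- The language of `G`. -/
def CNF.lang {N T : Type*} (G : CNF N T) : Set (List T) := {s | G.Derives G.start s}

/-- `A ⇒* s` in the augmented grammar `G_e` with a derivation of score exactly `u`. -/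
def CNF.augDerives {N T : Type*} (G : CNF N T) (A : N ⊕ Unit) (s : List T) (u : ℕ) : Prop :=
  ScoredDerives G.augProds [Sum.inl A] (s.map Sum.inr) u

/-- Cost structure for Levenshtein distance (removed from Mathlib; restored here). -/
structure Levenshtein.Cost (α β δ : Type*) where
  delete : α → δ
  insert : β → δ
  substitute : α → β → δ

/-- The default unit cost. -/
def Levenshtein.defaultCost {α : Type*} [DecidableEq α] : Levenshtein.Cost α α ℕ where
  delete _ := 1
  insert _ := 1
  substitute a b := if a = b then 0 else 1

/-- One row step of the Levenshtein dynamic program. -/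
def Levenshtein.impl {α β δ : Type*} [AddZeroClass δ] [Min δ] (C : Levenshtein.Cost α β δ)
    (xs : List α) (y : β) (d : {r : List δ // 0 < r.length}) :
    {r : List δ // 0 < r.length} :=
  let ⟨ds, w⟩ := d
  xs.zip (ds.zip ds.tail) |>.foldr
    (init := ⟨[ds.getLast (List.length_pos_iff.mp w) + C.insert y], by simp⟩)
    (fun ⟨x, d₀, d₁⟩ ⟨r, w⟩ =>
      ⟨min (C.delete x + r[0]) (min (C.insert y + d₀) (C.substitute x y + d₁)) :: r, by simp⟩)

/-- Levenshtein distances of all suffixes of `xs` to `ys`. -/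
def suffixLevenshtein {α β δ : Type*} [AddZeroClass δ] [Min δ] (C : Levenshtein.Cost α β δ)
    (xs : List α) (ys : List β) : {r : List δ // 0 < r.length} :=
  ys.foldr
    (Levenshtein.impl C xs)
    (xs.foldr (init := ⟨[0], by simp⟩) (fun a ⟨r, w⟩ => ⟨(C.delete a + r[0]) :: r, by simp⟩))

/-- The Levenshtein distance with cost `C`. -/
def levenshtein {α β δ : Type*} [AddZeroClass δ] [Min δ] (C : Levenshtein.Cost α β δ)
    (xs : List α) (ys : List β) : δ :=
  let ⟨r, w⟩ := suffixLevenshtein C xs ys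
  r[0]

/-- The standard (unit-cost) string edit distance. -/
def editDist {T : Type*} [DecidableEq T] (s t : List T) : ℕ :=
  levenshtein Levenshtein.defaultCost s t

/-- The language edit distance `d_G(G,s) = min_{z ∈ L(G)} d_ed(s,z)`. -/
noncomputable def dG {N T : Type*} [DecidableEq T] (G : CNF N T) (s : List T) : ℕ :=
  sInf {d | ∃ z ∈ G.lang, editDist s z = d}

namespace LED

open Sum

variable {N T : Type*}

theorem SD_cast {P : Set (ScoredProd N T)} {u v : List (N ⊕ T)} {c c' : ℕ}
    (h : ScoredDerives P u v c) (hc : c = c') : ScoredDerives P u v c' := hc ▸ h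

theorem SD_trans_aux {P : Set (ScoredProd N T)} {v w : List (N ⊕ T)} {d : ℕ}
    (h2 : ScoredDerives P v w d) :
    ∀ {u : List (N ⊕ T)} {c : ℕ}, ScoredDerives P u v c → ScoredDerives P u w (c + d) := by
  induction h2 with
  | refl => intro u c h1; exact SD_cast h1 (by omega)
  | @step l r p c' h hp ih =>
      intro u c h1
      exact SD_cast (ScoredDerives.step (ih h1) hp) (by omega)

theorem SD_trans {P : Set (ScoredProd N T)} {u v w : List (N ⊕ T)} {c d : ℕ}
    (h1 : ScoredDerives P u v c) (h2 : ScoredDerives P v w d) :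
    ScoredDerives P u w (c + d) := SD_trans_aux h2 h1

theorem SD_single {P : Set (ScoredProd N T)} {p : ScoredProd N T} (hp : p ∈ P) :
    ScoredDerives P [Sum.inl p.lhs] p.rhs p.score := by
  have h := ScoredDerives.step (l := []) (r := []) (ScoredDerives.refl _) hp
  simpa using h

theorem SD_context {P : Set (ScoredProd N T)} {u v : List (N ⊕ T)} {c : ℕ}
    (h : ScoredDerives P u v c) (x y : List (N ⊕ T)) :
    ScoredDerives P (x ++ u ++ y) (x ++ v ++ y) c := by
  induction h with
  | refl => exact ScoredDerives.refl _
  | @step l r p c' h hp ih =>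
      have ih' : ScoredDerives P (x ++ u ++ y) (x ++ l ++ [Sum.inl p.lhs] ++ (r ++ y)) c' := by
        simpa [List.append_assoc] using ih
      have h2 := ScoredDerives.step ih' hp
      simpa [List.append_assoc] using h2

theorem SD_concat {P : Set (ScoredProd N T)} {u1 v1 u2 v2 : List (N ⊕ T)} {c1 c2 : ℕ}
    (h1 : ScoredDerives P u1 v1 c1) (h2 : ScoredDerives P u2 v2 c2) :
    ScoredDerives P (u1 ++ u2) (v1 ++ v2) (c1 + c2) :=
  SD_trans (by simpa using SD_context h1 [] u2) (by simpa using SD_context h2 v1 [])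

/-- Tree-style generation relation. -/
inductive GenF (P : Set (ScoredProd N T)) : List (N ⊕ T) → List T → ℕ → Prop
  | nil : GenF P [] [] 0
  | term (a : T) {w : List (N ⊕ T)} {s : List T} {u : ℕ} :
      GenF P w s u → GenF P (Sum.inr a :: w) (a :: s) u
  | nt {p : ScoredProd N T} (hp : p ∈ P) {w : List (N ⊕ T)} {s1 s2 : List T} {u1 u2 : ℕ} :
      GenF P p.rhs s1 u1 → GenF P w s2 u2 →
      GenF P (Sum.inl p.lhs :: w) (s1 ++ s2) (u1 + p.score + u2)

theorem GenF_cast {P : Set (ScoredProd N T)} {w : List (N ⊕ T)} {s : List T} {c c' : ℕ}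
    (h : GenF P w s c) (hc : c = c') : GenF P w s c' := hc ▸ h

theorem GenF_append {P : Set (ScoredProd N T)} {w1 : List (N ⊕ T)} {s1 : List T} {u1 : ℕ}
    (h1 : GenF P w1 s1 u1) {w2 : List (N ⊕ T)} {s2 : List T} {u2 : ℕ}
    (h2 : GenF P w2 s2 u2) : GenF P (w1 ++ w2) (s1 ++ s2) (u1 + u2) := by
  induction h1 with
  | nil => simpa using h2
  | term a h ih => simpa using GenF.term a ih
  | @nt p hp w s1' s2' u1' u2' hr ht ih1 ih2 =>
      have h := GenF.nt hp hr ih2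
      have h' : GenF P (Sum.inl p.lhs :: (w ++ w2)) ((s1' ++ s2') ++ s2)
          (u1' + p.score + u2' + u2) := by
        rw [List.append_assoc]; exact GenF_cast h (by omega)
      simpa using h'

theorem GenF_nil_inv {P : Set (ScoredProd N T)} {s : List T} {u : ℕ}
    (h : GenF P ([] : List (N ⊕ T)) s u) : s = [] ∧ u = 0 := by
  cases h; exact ⟨rfl, rfl⟩

theorem GenF_inr_cons_inv {P : Set (ScoredProd N T)} {a : T} {w : List (N ⊕ T)} {s : List T}
    {u : ℕ} (h : GenF P (Sum.inr a :: w) s u) : ∃ s', s = a :: s' ∧ GenF P w s' u := by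
  cases h with | term a h => exact ⟨_, rfl, h⟩

theorem GenF_inl_cons_inv {P : Set (ScoredProd N T)} {A : N} {w : List (N ⊕ T)} {s : List T}
    {u : ℕ} (h : GenF P (Sum.inl A :: w) s u) :
    ∃ p ∈ P, p.lhs = A ∧ ∃ s1 s2 u1 u2, GenF P p.rhs s1 u1 ∧ GenF P w s2 u2 ∧
      s = s1 ++ s2 ∧ u = u1 + p.score + u2 := by
  cases h with | nt hp h1 h2 => exact ⟨_, hp, rfl, _, _, _, _, h1, h2, rfl, rfl⟩

theorem GenF_single_inr_inv {P : Set (ScoredProd N T)} {a : T} {s : List T} {u : ℕ}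
    (h : GenF P [Sum.inr a] s u) : s = [a] ∧ u = 0 := by
  obtain ⟨s', rfl, h'⟩ := GenF_inr_cons_inv h
  obtain ⟨rfl, rfl⟩ := GenF_nil_inv h'
  exact ⟨rfl, rfl⟩

theorem GenF_single {P : Set (ScoredProd N T)} {p : ScoredProd N T} (hp : p ∈ P)
    {s : List T} {u : ℕ} (h : GenF P p.rhs s u) :
    GenF P [Sum.inl p.lhs] s (u + p.score) := by
  simpa using GenF.nt hp h GenF.nil

theorem GenF_map_inr {P : Set (ScoredProd N T)} (s : List T) :
    GenF P (s.map Sum.inr) s 0 := by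
  induction s with
  | nil => exact GenF.nil
  | cons a s ih => exact GenF.term a ih

theorem genF_toSD {P : Set (ScoredProd N T)} {w : List (N ⊕ T)} {s : List T} {u : ℕ}
    (h : GenF P w s u) : ScoredDerives P w (s.map Sum.inr) u := by
  induction h with
  | nil => exact ScoredDerives.refl []
  | term a h ih => simpa using SD_context ih [Sum.inr a] []
  | @nt p hp w s1 s2 u1 u2 h1 h2 ih1 ih2 =>
      have step1 : ScoredDerives P (Sum.inl p.lhs :: w) (p.rhs ++ w) p.score := by
        simpa using SD_context (SD_single hp) [] w
      have step2 := SD_concat ih1 ih2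
      have h3 := SD_trans step1 step2
      exact SD_cast (by simpa [List.map_append] using h3) (by omega)

theorem GenF_split {P : Set (ScoredProd N T)} :
    ∀ (w1 : List (N ⊕ T)) {w2 : List (N ⊕ T)} {s : List T} {u : ℕ},
      GenF P (w1 ++ w2) s u →
      ∃ s1 s2 u1 u2, s = s1 ++ s2 ∧ u = u1 + u2 ∧ GenF P w1 s1 u1 ∧ GenF P w2 s2 u2 := by
  intro w1
  induction w1 with
  | nil => intro w2 s u h; exact ⟨[], s, 0, u, rfl, by omega, GenF.nil, h⟩
  | cons x w1 ih =>
      intro w2 s u h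
      cases x with
      | inl A =>
          obtain ⟨p, hp, hlhs, s1, s2, u1, u2, hr, ht, rfl, rfl⟩ := GenF_inl_cons_inv h
          obtain ⟨t1, t2, v1, v2, rfl, rfl, g1, g2⟩ := ih ht
          refine ⟨s1 ++ t1, t2, u1 + p.score + v1, v2, by simp [List.append_assoc], by omega,
            ?_, g2⟩
          rw [← hlhs]
          exact GenF.nt hp hr g1
      | inr a =>
          obtain ⟨s', rfl, h'⟩ := GenF_inr_cons_inv h
          obtain ⟨t1, t2, v1, v2, rfl, rfl, g1, g2⟩ := ih h'
          exact ⟨a :: t1, t2, v1, v2, rfl, rfl, GenF.term a g1, g2⟩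

theorem genF_unstep {P : Set (ScoredProd N T)} {p : ScoredProd N T} (hp : p ∈ P)
    {l r : List (N ⊕ T)} {s : List T} {u : ℕ}
    (h : GenF P (l ++ p.rhs ++ r) s u) :
    GenF P (l ++ [Sum.inl p.lhs] ++ r) s (u + p.score) := by
  rw [List.append_assoc] at h
  obtain ⟨s1, s23, u1, u23, rfl, rfl, g1, g23⟩ := GenF_split l h
  obtain ⟨s2, s3, u2, u3, rfl, rfl, g2, g3⟩ := GenF_split p.rhs g23
  have hm : GenF P [Sum.inl p.lhs] s2 (u2 + p.score) := GenF_single hp g2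
  have h2 := GenF_append g1 (GenF_append hm g3)
  rw [← List.append_assoc] at h2
  exact GenF_cast h2 (by omega)

theorem SD_to_genF_aux {P : Set (ScoredProd N T)} {w v : List (N ⊕ T)} {c : ℕ}
    (h : ScoredDerives P w v c) :
    ∀ {s : List T} {u : ℕ}, GenF P v s u → GenF P w s (c + u) := by
  induction h with
  | refl => intro s u h; exact GenF_cast h (by omega)
  | @step l r p c h hp ih =>
      intro s u hg
      exact GenF_cast (ih (genF_unstep hp hg)) (by omega)

theorem SD_iff_genF {P : Set (ScoredProd N T)} {w : List (N ⊕ T)} {s : List T} {c : ℕ} :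
    ScoredDerives P w (s.map Sum.inr) c ↔ GenF P w s c :=
  ⟨fun h => GenF_cast (SD_to_genF_aux h (GenF_map_inr s)) (by omega), genF_toSD⟩

end LED
namespace LED

variable {T : Type*}

/-- Edit scripts: `E s t n` means `s` can be obtained from `t` by an alignment of cost `n`. -/
inductive E : List T → List T → ℕ → Prop
  | nil : E [] [] 0
  | eq (a : T) {s t : List T} {n : ℕ} : E s t n → E (a :: s) (a :: t) n
  | sub (a b : T) {s t : List T} {n : ℕ} : E s t n → E (a :: s) (b :: t) (n + 1)
  | insL (a : T) {s t : List T} {n : ℕ} : E s t n → E (a :: s) t (n + 1)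
  | insR (b : T) {s t : List T} {n : ℕ} : E s t n → E s (b :: t) (n + 1)

theorem E_cast {s t : List T} {n n' : ℕ} (h : E s t n) (hn : n = n') : E s t n' := hn ▸ h

theorem E_append {s1 t1 : List T} {n1 : ℕ} (h1 : E s1 t1 n1) {s2 t2 : List T} {n2 : ℕ}
    (h2 : E s2 t2 n2) : E (s1 ++ s2) (t1 ++ t2) (n1 + n2) := by
  induction h1 with
  | nil => simpa using h2
  | eq a h ih => simp only [List.cons_append]; exact E.eq a ih
  | sub a b h ih => simp only [List.cons_append]; exact E_cast (E.sub a b ih) (by omega)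
  | insL a h ih => simp only [List.cons_append]; exact E_cast (E.insL a ih) (by omega)
  | insR b h ih => simp only [List.cons_append]; exact E_cast (E.insR b ih) (by omega)

theorem E_nil_right {s t : List T} {n : ℕ} (h : E s t n) : t = [] → n = s.length := by
  induction h with
  | nil => intro _; rfl
  | eq a h ih => intro ht; exact absurd ht (by simp)
  | sub a b h ih => intro ht; exact absurd ht (by simp)
  | insL a h ih => intro ht; simp [ih ht]
  | insR b h ih => intro ht; exact absurd ht (by simp)

theorem E_split {s t : List T} {n : ℕ} (h : E s t n) :
    ∀ t1 t2, t = t1 ++ t2 →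
      ∃ s1 s2 n1 n2, s = s1 ++ s2 ∧ n = n1 + n2 ∧ E s1 t1 n1 ∧ E s2 t2 n2 := by
  induction h with
  | nil =>
      intro t1 t2 ht
      obtain ⟨rfl, rfl⟩ := List.append_eq_nil_iff.mp ht.symm
      exact ⟨[], [], 0, 0, rfl, rfl, E.nil, E.nil⟩
  | @eq a s t n h ih =>
      intro t1 t2 ht
      cases t1 with
      | nil =>
          have ht2 : t2 = a :: t := by simpa using ht.symm
          subst ht2
          exact ⟨[], a :: s, 0, n, rfl, by omega, E.nil, E.eq a h⟩
      | cons c t1 =>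
          obtain ⟨rfl, rfl⟩ : a = c ∧ t = t1 ++ t2 := by
            have := ht; simp only [List.cons_append, List.cons.injEq] at this
            exact ⟨this.1, this.2⟩
          obtain ⟨s1, s2, n1, n2, rfl, rfl, e1, e2⟩ := ih t1 t2 rfl
          exact ⟨a :: s1, s2, n1, n2, rfl, rfl, E.eq a e1, e2⟩
  | @sub a b s t n h ih =>
      intro t1 t2 ht
      cases t1 with
      | nil =>
          have ht2 : t2 = b :: t := by simpa using ht.symm
          subst ht2
          exact ⟨[], a :: s, 0, n + 1, rfl, by omega, E.nil, E.sub a b h⟩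
      | cons c t1 =>
          obtain ⟨rfl, rfl⟩ : b = c ∧ t = t1 ++ t2 := by
            have := ht; simp only [List.cons_append, List.cons.injEq] at this
            exact ⟨this.1, this.2⟩
          obtain ⟨s1, s2, n1, n2, rfl, rfl, e1, e2⟩ := ih t1 t2 rfl
          exact ⟨a :: s1, s2, n1 + 1, n2, rfl, by omega, E.sub a b e1, e2⟩
  | @insL a s t n h ih =>
      intro t1 t2 ht
      obtain ⟨s1, s2, n1, n2, rfl, rfl, e1, e2⟩ := ih t1 t2 ht
      exact ⟨a :: s1, s2, n1 + 1, n2, rfl, by omega, E.insL a e1, e2⟩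
  | @insR b s t n h ih =>
      intro t1 t2 ht
      cases t1 with
      | nil =>
          have ht2 : t2 = b :: t := by simpa using ht.symm
          subst ht2
          exact ⟨[], s, 0, n + 1, rfl, by omega, E.nil, E.insR b h⟩
      | cons c t1 =>
          obtain ⟨rfl, rfl⟩ : b = c ∧ t = t1 ++ t2 := by
            have := ht; simp only [List.cons_append, List.cons.injEq] at this
            exact ⟨this.1, this.2⟩
          obtain ⟨s1, s2, n1, n2, rfl, rfl, e1, e2⟩ := ih t1 t2 rfl
          exact ⟨s1, s2, n1 + 1, n2, rfl, by omega, E.insR b e1, e2⟩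

section LevAux

variable {α β δ : Type*} [AddZeroClass δ] [Min δ] {C : Levenshtein.Cost α β δ}

theorem impl_cons_fst_zero (x : α) (xs : List α) (y : β) (d : δ) (ds : List δ) (w)
    (w' : 0 < List.length ds) :
    (Levenshtein.impl C (x :: xs) y ⟨d :: ds, w⟩).1[0]'(by
        match ds, w' with | _ :: _, _ => exact Nat.zero_lt_succ _) =
      let ⟨r, w⟩ := Levenshtein.impl C xs y ⟨ds, w'⟩
      min (C.delete x + r[0]) (min (C.insert y + d) (C.substitute x y + ds[0])) :=
  match ds, w' with | _ :: _, _ => rfl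

theorem impl_cons (x : α) (xs : List α) (y : β) (d : δ) (ds : List δ) (w)
    (w' : 0 < List.length ds) :
    Levenshtein.impl C (x :: xs) y ⟨d :: ds, w⟩ =
      let ⟨r, w⟩ := Levenshtein.impl C xs y ⟨ds, w'⟩
      ⟨min (C.delete x + r[0]) (min (C.insert y + d) (C.substitute x y + ds[0])) :: r, by simp⟩ :=
  match ds, w' with | _ :: _, _ => rfl

theorem impl_length (xs : List α) (y : β) (d : {r : List δ // 0 < r.length})
    (w : d.1.length = xs.length + 1) :
    (Levenshtein.impl C xs y d).1.length = xs.length + 1 := by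
  induction xs generalizing d with
  | nil => rfl
  | cons x xs ih =>
    dsimp [Levenshtein.impl]
    match d, w with
    | ⟨d₁ :: d₂ :: ds, _⟩, w =>
      dsimp
      congr 1
      exact ih ⟨d₂ :: ds, (by simp)⟩ (by simpa using w)

theorem suffixLevenshtein_length (xs : List α) (ys : List β) :
    (suffixLevenshtein C xs ys).1.length = xs.length + 1 := by
  induction ys with
  | nil =>
    dsimp [suffixLevenshtein]
    induction xs with
    | nil => rfl
    | cons _ xs ih =>
      simp_all
  | cons y ys ih =>
    dsimp [suffixLevenshtein]
    rw [impl_length]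
    exact ih

theorem suffixLevenshtein_cons₁_aux {α} {x y : { l : List α // 0 < l.length }}
    (w₀ : x.1[0]'x.2 = y.1[0]'y.2) (w : x.1.tail = y.1.tail) : x = y := by
  match x, y with
  | ⟨hx :: tx, _⟩, ⟨hy :: ty, _⟩ => simp_all

theorem suffixLevenshtein_cons₁ (x : α) (xs : List α) (ys : List β) :
    suffixLevenshtein C (x :: xs) ys =
      ⟨levenshtein C (x :: xs) ys :: (suffixLevenshtein C xs ys).1, by simp⟩ := by
  induction ys with
  | nil => rfl
  | cons y ys ih =>
    apply suffixLevenshtein_cons₁_aux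
    · rfl
    · rw [show suffixLevenshtein C (x :: xs) (y :: ys)
          = Levenshtein.impl C (x :: xs) y (suffixLevenshtein C (x :: xs) ys) from rfl, ih,
        impl_cons]
      · rfl
      · simp [suffixLevenshtein_length]

@[simp]
theorem levenshtein_nil_nil : levenshtein C [] [] = 0 := rfl

@[simp]
theorem levenshtein_nil_cons {C : Levenshtein.Cost α β ℕ} (y : β) (ys : List β) :
    levenshtein C [] (y :: ys) = C.insert y + levenshtein C [] ys := by
  unfold levenshtein
  rw [show suffixLevenshtein C [] (y :: ys)
      = Levenshtein.impl C [] y (suffixLevenshtein C [] ys) from rfl]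
  have hl := suffixLevenshtein_length (C := C) [] ys
  generalize suffixLevenshtein C [] ys = S at hl ⊢
  obtain ⟨r, w⟩ := S
  rcases r with _ | ⟨a, _ | ⟨b, r⟩⟩
  · simp at w
  · simp [Levenshtein.impl, Nat.add_comm]
  · simp at hl

@[simp]
theorem levenshtein_cons_nil (x : α) (xs : List α) :
    levenshtein C (x :: xs) [] = C.delete x + levenshtein C xs [] :=
  rfl

theorem levenshtein_cons_cons (x : α) (xs : List α) (y : β) (ys : List β) :
    levenshtein C (x :: xs) (y :: ys) =
      min (C.delete x + levenshtein C xs (y :: ys))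
        (min (C.insert y + levenshtein C (x :: xs) ys)
          (C.substitute x y + levenshtein C xs ys)) := by
  conv =>
    lhs
    dsimp only [levenshtein]
  rw [show suffixLevenshtein C (x :: xs) (y :: ys)
      = Levenshtein.impl C (x :: xs) y (suffixLevenshtein C (x :: xs) ys) from rfl]
  simp only [suffixLevenshtein_cons₁]
  rw [impl_cons_fst_zero]
  · rfl

end LevAux

section Lev

variable [DecidableEq T]

theorem lev_del (a : T) (s t : List T) :
    levenshtein Levenshtein.defaultCost (a :: s) t ≤
      1 + levenshtein Levenshtein.defaultCost s t := by
  cases t with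
  | nil => simp [Levenshtein.defaultCost]
  | cons b t =>
      rw [levenshtein_cons_cons]
      refine le_trans (min_le_left _ _) ?_
      simp [Levenshtein.defaultCost]

theorem lev_ins (b : T) (s t : List T) :
    levenshtein Levenshtein.defaultCost s (b :: t) ≤
      1 + levenshtein Levenshtein.defaultCost s t := by
  cases s with
  | nil => simp [Levenshtein.defaultCost]
  | cons a s =>
      rw [levenshtein_cons_cons]
      refine le_trans ((min_le_right _ _).trans (min_le_left _ _)) ?_
      simp [Levenshtein.defaultCost]

theorem lev_subst (a b : T) (s t : List T) :
    levenshtein Levenshtein.defaultCost (a :: s) (b :: t) ≤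
      (if a = b then 0 else 1) + levenshtein Levenshtein.defaultCost s t := by
  rw [levenshtein_cons_cons]
  refine le_trans ((min_le_right _ _).trans (min_le_right _ _)) ?_
  simp [Levenshtein.defaultCost]

theorem E_le_lev {s t : List T} {n : ℕ} (h : E s t n) :
    levenshtein Levenshtein.defaultCost s t ≤ n := by
  induction h with
  | nil => simp
  | @eq a s t n h ih =>
      have hb := lev_subst a a s t
      rw [if_pos rfl] at hb
      omega
  | @sub a b s t n h ih =>
      have hb := lev_subst a b s t
      have h1 : (if a = b then 0 else 1) ≤ 1 := by split <;> omega
      omega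
  | @insL a s t n h ih =>
      have hb := lev_del a s t
      omega
  | @insR b s t n h ih =>
      have hb := lev_ins b s t
      omega

theorem E_of_lev : ∀ s t : List T, E s t (levenshtein Levenshtein.defaultCost s t) := by
  intro s
  induction s with
  | nil =>
      intro t
      induction t with
      | nil => simpa using E.nil
      | cons b t ih =>
          rw [levenshtein_nil_cons]
          exact E_cast (E.insR b ih) (by simp [Levenshtein.defaultCost]; omega)
  | cons a s ihs =>
      intro t
      induction t with
      | nil =>
          rw [levenshtein_cons_nil]
          exact E_cast (E.insL a (ihs [])) (by simp [Levenshtein.defaultCost]; omega)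
      | cons b t iht =>
          rw [levenshtein_cons_cons]
          rcases min_cases (Levenshtein.defaultCost.delete a +
              levenshtein Levenshtein.defaultCost s (b :: t))
            (min (Levenshtein.defaultCost.insert b +
                levenshtein Levenshtein.defaultCost (a :: s) t)
              (Levenshtein.defaultCost.substitute a b +
                levenshtein Levenshtein.defaultCost s t)) with ⟨h1, -⟩ | ⟨h1, -⟩
          · rw [h1]
            exact E_cast (E.insL a (ihs (b :: t))) (by simp [Levenshtein.defaultCost]; omega)
          · rw [h1]
            rcases min_cases (Levenshtein.defaultCost.insert b +
                levenshtein Levenshtein.defaultCost (a :: s) t)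
              (Levenshtein.defaultCost.substitute a b +
                levenshtein Levenshtein.defaultCost s t) with ⟨h2, -⟩ | ⟨h2, -⟩
            · rw [h2]
              exact E_cast (E.insR b iht) (by simp [Levenshtein.defaultCost]; omega)
            · rw [h2]
              by_cases hab : a = b
              · subst hab
                exact E_cast (E.eq a (ihs t)) (by simp [Levenshtein.defaultCost])
              · exact E_cast (E.sub a b (ihs t)) (by simp [Levenshtein.defaultCost, hab]; omega)

end Lev

end LED
namespace LED

variable {N T : Type*} {G : CNF N T}

theorem mem_prods_bin {A B C : N} (h : (A, B, C) ∈ G.bin) :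
    (⟨A, [Sum.inl B, Sum.inl C], 0⟩ : ScoredProd N T) ∈ G.prods :=
  Or.inl ⟨A, B, C, h, rfl⟩

theorem mem_prods_term {A : N} {a : T} (h : (A, a) ∈ G.term) :
    (⟨A, [Sum.inr a], 0⟩ : ScoredProd N T) ∈ G.prods :=
  Or.inr (Or.inl ⟨A, a, h, rfl⟩)

theorem mem_prods_eps (h : G.eps) :
    (⟨G.start, [], 0⟩ : ScoredProd N T) ∈ G.prods :=
  Or.inr (Or.inr ⟨h, rfl⟩)

theorem mem_aug_lift {p : ScoredProd N T} (hp : p ∈ G.prods) : liftProd p ∈ G.augProds :=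
  Or.inl (Or.inl (Or.inl (Or.inl (Or.inl ⟨p, hp, rfl⟩))))

theorem mem_aug_sub {A : N} {y : T} (hx : ∃ x, (A, x) ∈ G.term) (hy : (A, y) ∉ G.term) :
    (⟨Sum.inl A, [Sum.inr y], 1⟩ : ScoredProd (N ⊕ Unit) T) ∈ G.augProds :=
  Or.inl (Or.inl (Or.inl (Or.inl (Or.inr ⟨A, y, hx, hy, rfl⟩))))

theorem mem_aug_ins (x : T) :
    (⟨Sum.inr (), [Sum.inr x], 1⟩ : ScoredProd (N ⊕ Unit) T) ∈ G.augProds :=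
  Or.inl (Or.inl (Or.inl (Or.inr ⟨x, rfl⟩)))

theorem mem_aug_ia (A : N) :
    (⟨Sum.inl A, [Sum.inl (Sum.inr ()), Sum.inl (Sum.inl A)], 0⟩ :
      ScoredProd (N ⊕ Unit) T) ∈ G.augProds :=
  Or.inl (Or.inl (Or.inr ⟨A, Or.inl rfl⟩))

theorem mem_aug_ai (A : N) :
    (⟨Sum.inl A, [Sum.inl (Sum.inl A), Sum.inl (Sum.inr ())], 0⟩ :
      ScoredProd (N ⊕ Unit) T) ∈ G.augProds :=
  Or.inl (Or.inl (Or.inr ⟨A, Or.inr rfl⟩))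

theorem mem_aug_ii :
    (⟨Sum.inr (), [Sum.inl (Sum.inr ()), Sum.inl (Sum.inr ())], 0⟩ :
      ScoredProd (N ⊕ Unit) T) ∈ G.augProds :=
  Or.inl (Or.inr rfl)

theorem mem_aug_del {A : N} {x : T} (hx : (A, x) ∈ G.term) :
    (⟨Sum.inl A, [], 1⟩ : ScoredProd (N ⊕ Unit) T) ∈ G.augProds :=
  Or.inr ⟨A, x, hx, rfl⟩

/-- The insertion nonterminal generates any nonempty string, one unit per letter. -/
theorem Igen : ∀ s : List T, s ≠ [] →
    GenF G.augProds [Sum.inl (Sum.inr ())] s s.length := by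
  intro s
  induction s with
  | nil => intro h; exact absurd rfl h
  | cons a s ih =>
      intro _
      rcases eq_or_ne s [] with rfl | hs
      · have h0 : GenF G.augProds [Sum.inr a] [a] 0 := GenF.term a GenF.nil
        simpa using GenF_single (mem_aug_ins (G := G) a) h0
      · have ha : GenF G.augProds [Sum.inl (Sum.inr ())] [a] 1 := by
          simpa using GenF_single (mem_aug_ins (G := G) a) (GenF.term a GenF.nil)
        have h1 : GenF G.augProds [Sum.inl (Sum.inr ()), Sum.inl (Sum.inr ())]
            ([a] ++ s) (1 + s.length) := by
          simpa using GenF_append ha (ih hs)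
        have h2 := GenF_single (mem_aug_ii (G := G)) h1
        exact GenF_cast (by simpa using h2) (by simp only [List.length_cons]; omega)

theorem appendI {A : N} {s1 : List T} {u : ℕ}
    (h : GenF G.augProds [Sum.inl (Sum.inl A)] s1 u) (t : List T) :
    GenF G.augProds [Sum.inl (Sum.inl A)] (s1 ++ t) (u + t.length) := by
  rcases eq_or_ne t [] with rfl | ht
  · simpa using h
  · have h2 : GenF G.augProds [Sum.inl (Sum.inl A), Sum.inl (Sum.inr ())] (s1 ++ t)
        (u + t.length) := by
      simpa using GenF_append h (Igen t ht)
    simpa using GenF_single (mem_aug_ai (G := G) A) h2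

theorem prependI {A : N} {s1 : List T} {u : ℕ}
    (h : GenF G.augProds [Sum.inl (Sum.inl A)] s1 u) (t : List T) (ht : t ≠ []) :
    GenF G.augProds [Sum.inl (Sum.inl A)] (t ++ s1) (t.length + u) := by
  have h2 : GenF G.augProds [Sum.inl (Sum.inr ()), Sum.inl (Sum.inl A)] (t ++ s1)
      (t.length + u) := by
    simpa using GenF_append (Igen t ht) h
  simpa using GenF_single (mem_aug_ia (G := G) A) h2

theorem termA {A : N} {a : T} (hx : (A, a) ∈ G.term) :
    GenF G.augProds [Sum.inl (Sum.inl A)] [a] 0 := by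
  have hp := mem_aug_lift (mem_prods_term hx)
  have h0 : GenF G.augProds (liftProd (⟨A, [Sum.inr a], 0⟩ : ScoredProd N T)).rhs [a] 0 :=
    GenF.term a GenF.nil
  simpa [liftProd] using GenF_single hp h0

theorem subA {A : N} {x : T} (hx : (A, x) ∈ G.term) (b : T) :
    ∃ u ≤ 1, GenF G.augProds [Sum.inl (Sum.inl A)] [b] u := by
  by_cases hb : (A, b) ∈ G.term
  · exact ⟨0, by omega, termA hb⟩
  · refine ⟨1, le_refl 1, ?_⟩
    have h0 : GenF G.augProds
        (⟨Sum.inl A, [Sum.inr b], 1⟩ : ScoredProd (N ⊕ Unit) T).rhs [b] 0 :=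
      GenF.term b GenF.nil
    simpa using GenF_single (mem_aug_sub ⟨x, hx⟩ hb) h0

theorem delA {A : N} {x : T} (hx : (A, x) ∈ G.term) :
    GenF G.augProds [Sum.inl (Sum.inl A)] ([] : List T) 1 := by
  simpa using GenF_single (mem_aug_del hx) GenF.nil

/-- Simulating all edits against a single terminal production. -/
theorem Hlem {A : N} {a : T} (hA : (A, a) ∈ G.term) {s t : List T} {n : ℕ}
    (h : E s t n) : t = [a] → ∃ u ≤ n, GenF G.augProds [Sum.inl (Sum.inl A)] s u := by
  induction h with
  | nil => intro ht; exact absurd ht (by simp)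
  | @eq b s t n h ih =>
      intro ht
      obtain ⟨rfl, rfl⟩ : b = a ∧ t = [] := by simpa using ht
      have hn := E_nil_right h rfl
      refine ⟨s.length, by omega, ?_⟩
      simpa using appendI (termA hA) s
  | @sub b c s t n h ih =>
      intro ht
      obtain ⟨rfl, rfl⟩ : c = a ∧ t = [] := by simpa using ht
      have hn := E_nil_right h rfl
      obtain ⟨u, hu, g⟩ := subA hA b
      refine ⟨u + s.length, by omega, ?_⟩
      simpa using appendI g s
  | @insL b s t n h ih =>
      intro ht
      obtain ⟨u, hu, g⟩ := ih ht
      exact ⟨1 + u, by omega, by simpa using prependI g [b] (by simp)⟩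
  | @insR b s t n h ih =>
      intro ht
      obtain ⟨rfl, rfl⟩ : b = a ∧ t = [] := by simpa using ht
      have hn := E_nil_right h rfl
      refine ⟨1 + s.length, by omega, ?_⟩
      simpa using appendI (delA hA) s

def liftF (w : List (N ⊕ T)) : List ((N ⊕ Unit) ⊕ T) := w.map (Sum.map Sum.inl id)

theorem liftF_rhs (p : ScoredProd N T) : (liftProd p).rhs = liftF p.rhs := rfl

/-- The key simulation lemma: an edit script against a `G`-derivation can be realized
in the augmented grammar. -/
theorem sim : ∀ {w : List (N ⊕ T)} {s' : List T} {c : ℕ}, GenF G.prods w s' c →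
    (∀ x ∈ w, ∃ B : N, x = Sum.inl B) →
    ∀ s n, E s s' n → (w = [] → s = []) →
      ∃ u ≤ n, GenF G.augProds (liftF w) s u := by
  intro w s' c h
  induction h with
  | nil =>
      intro _ s n hE hnil
      obtain rfl := hnil rfl
      exact ⟨0, Nat.zero_le n, GenF.nil⟩
  | @term a w s u h ih =>
      intro hall
      obtain ⟨B, hB⟩ := hall (Sum.inr a) (by simp)
      simp at hB
  | @nt p hp w s1 s2 u1 u2 h1 h2 ih1 ih2 =>
      intro hall s n hE hne
      have htail : ∀ x ∈ w, ∃ B : N, x = Sum.inl B := fun x hx => hall x (by simp [hx])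
      have hp0 := hp
      simp only [CNF.prods, Set.mem_setOf_eq] at hp
      rcases hp with ⟨A, B, C, hbin, rfl⟩ | ⟨A, a, hterm, rfl⟩ | ⟨heps, rfl⟩
      · -- binary rule
        have hrhs : ∀ x ∈ (⟨A, [Sum.inl B, Sum.inl C], 0⟩ : ScoredProd N T).rhs,
            ∃ B' : N, x = Sum.inl B' := by
          intro x hx
          simp only [List.mem_cons, List.not_mem_nil, or_false] at hx
          rcases hx with rfl | rfl
          exacts [⟨B, rfl⟩, ⟨C, rfl⟩]
        rcases eq_or_ne w [] with rfl | hw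
        · obtain ⟨rfl, rfl⟩ := GenF_nil_inv h2
          rw [List.append_nil] at hE
          obtain ⟨v, hv, g⟩ := ih1 hrhs s n hE (by simp)
          refine ⟨v, hv, ?_⟩
          have node := GenF.nt (p := liftProd ⟨A, [Sum.inl B, Sum.inl C], 0⟩)
            (mem_aug_lift hp0) g GenF.nil
          simpa [liftF, liftProd] using node
        · obtain ⟨a1, a2, n1, n2, rfl, rfl, hE1, hE2⟩ := E_split hE s1 s2 rfl
          obtain ⟨v1, hv1, g1⟩ := ih1 hrhs a1 n1 hE1 (by simp)
          obtain ⟨v2, hv2, g2⟩ := ih2 htail a2 n2 hE2 (fun h => absurd h hw)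
          refine ⟨v1 + v2, by omega, ?_⟩
          have node := GenF.nt (p := liftProd ⟨A, [Sum.inl B, Sum.inl C], 0⟩)
            (mem_aug_lift hp0) g1 g2
          have hs : (liftProd (⟨A, [Sum.inl B, Sum.inl C], 0⟩ : ScoredProd N T)).score = 0 := rfl
          exact GenF_cast node (by omega)
      · -- terminal rule
        obtain ⟨rfl, rfl⟩ := GenF_single_inr_inv h1
        rcases eq_or_ne w [] with rfl | hw
        · obtain ⟨rfl, rfl⟩ := GenF_nil_inv h2
          rw [List.append_nil] at hE
          obtain ⟨u, hu, g⟩ := Hlem hterm hE rfl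
          exact ⟨u, hu, g⟩
        · obtain ⟨a1, a2, n1, n2, rfl, rfl, hE1, hE2⟩ := E_split hE [a] s2 rfl
          obtain ⟨v1, hv1, g1⟩ := Hlem hterm hE1 rfl
          obtain ⟨v2, hv2, g2⟩ := ih2 htail a2 n2 hE2 (fun h => absurd h hw)
          exact ⟨v1 + v2, by omega, GenF_append g1 g2⟩
      · -- epsilon rule
        obtain ⟨rfl, rfl⟩ := GenF_nil_inv h1
        rw [List.nil_append] at hE
        have head : GenF G.augProds [Sum.inl (Sum.inl G.start)] ([] : List T) 0 := by
          simpa [liftF, liftProd] using GenF_single (mem_aug_lift hp0) GenF.nil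
        rcases eq_or_ne w [] with rfl | hw
        · obtain ⟨rfl, rfl⟩ := GenF_nil_inv h2
          have hn := E_nil_right hE rfl
          refine ⟨s.length, by omega, ?_⟩
          simpa [liftF] using appendI head s
        · obtain ⟨v2, hv2, g2⟩ := ih2 htail s n hE (fun h => absurd h hw)
          refine ⟨v2, hv2, ?_⟩
          simpa [liftF] using GenF_append head g2

theorem sim_top {A : N} {s' s : List T} {c n : ℕ}
    (hd : GenF G.prods [Sum.inl A] s' c) (hE : E s s' n) :
    ∃ u ≤ n, GenF G.augProds [Sum.inl (Sum.inl A)] s u := by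
  have hall : ∀ x ∈ ([Sum.inl A] : List (N ⊕ T)), ∃ B : N, x = Sum.inl B := by
    intro x hx; simp only [List.mem_singleton] at hx; exact ⟨A, hx⟩
  obtain ⟨u, hu, g⟩ := sim hd hall s n hE (by simp)
  exact ⟨u, hu, g⟩

end LED
namespace LED

variable {N T : Type*} {G : CNF N T}

def unliftSym : (N ⊕ Unit) ⊕ T → List (N ⊕ T)
  | Sum.inl (Sum.inl A) => [Sum.inl A]
  | Sum.inl (Sum.inr _) => []
  | Sum.inr a => [Sum.inr a]

def unlift (w : List ((N ⊕ Unit) ⊕ T)) : List (N ⊕ T) :=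
  w.foldr (fun x acc => unliftSym x ++ acc) []

theorem unlift_cons (x : (N ⊕ Unit) ⊕ T) (w : List ((N ⊕ Unit) ⊕ T)) :
    unlift (x :: w) = unliftSym x ++ unlift w := rfl

theorem unlift_liftF : ∀ w : List (N ⊕ T), unlift (liftF w) = w := by
  intro w
  induction w with
  | nil => rfl
  | cons x w ih =>
      cases x with
      | inl A => simp [liftF, Sum.map, unlift_cons, unliftSym] at ih ⊢; exact ih
      | inr a => simp [liftF, Sum.map, unlift_cons, unliftSym] at ih ⊢; exact ih

/-- From an augmented derivation, extract a `G`-derivable string within edit cost. -/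
theorem refl_sim : ∀ {w : List ((N ⊕ Unit) ⊕ T)} {s : List T} {u : ℕ},
    GenF G.augProds w s u →
    ∃ s' c n, GenF G.prods (unlift w) s' c ∧ E s s' n ∧ n ≤ u := by
  intro w s u h
  induction h with
  | nil => exact ⟨[], 0, 0, GenF.nil, E.nil, le_refl 0⟩
  | @term a w s u h ih =>
      obtain ⟨s', c, n, g, e, hn⟩ := ih
      exact ⟨a :: s', c, n, GenF.term a g, E.eq a e, hn⟩
  | @nt p hp w s1 s2 u1 u2 h1 h2 ih1 ih2 =>
      obtain ⟨s2', c2, n2, g2, e2, hn2⟩ := ih2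
      simp only [CNF.augProds, Set.mem_union, Set.mem_image, Set.mem_setOf_eq,
        Set.mem_singleton_iff] at hp
      rcases hp with ((((⟨q, hq, rfl⟩ | ⟨A, y, hx, hny, rfl⟩) | ⟨x, rfl⟩) | ⟨A, hAI⟩) | rfl) |
        ⟨A, x, hx, rfl⟩
      · -- lifted production
        obtain ⟨s1', c1, n1, g1, e1, hn1⟩ := ih1
        rw [show (liftProd q).rhs = liftF q.rhs from rfl, unlift_liftF] at g1
        refine ⟨s1' ++ s2', c1 + q.score + c2, n1 + n2, GenF.nt hq g1 g2,
          E_append e1 e2, ?_⟩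
        have hs : (liftProd q).score = q.score := rfl
        omega
      · -- substitution rule
        obtain ⟨rfl, rfl⟩ := GenF_single_inr_inv h1
        obtain ⟨x, hx⟩ := hx
        refine ⟨x :: s2', 0 + 0 + c2, (0 + 1) + n2,
          GenF.nt (mem_prods_term hx) (GenF.term x GenF.nil) g2,
          E_append (E.sub y x E.nil) e2, ?_⟩
        have hs : (⟨Sum.inl A, [Sum.inr y], 1⟩ : ScoredProd (N ⊕ Unit) T).score = 1 := rfl
        omega
      · -- insertion rule
        obtain ⟨rfl, rfl⟩ := GenF_single_inr_inv h1
        refine ⟨s2', c2, n2 + 1, g2, E.insL x e2, ?_⟩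
        have hs : (⟨Sum.inr (), [Sum.inr x], 1⟩ : ScoredProd (N ⊕ Unit) T).score = 1 := rfl
        omega
      · -- A → IA / A → AI
        rcases hAI with rfl | rfl
        · obtain ⟨s1', c1, n1, g1, e1, hn1⟩ := ih1
          refine ⟨s1' ++ s2', c1 + c2, n1 + n2,
            GenF_append (w1 := [Sum.inl A]) g1 g2, E_append e1 e2, by omega⟩
        · obtain ⟨s1', c1, n1, g1, e1, hn1⟩ := ih1
          refine ⟨s1' ++ s2', c1 + c2, n1 + n2,
            GenF_append (w1 := [Sum.inl A]) g1 g2, E_append e1 e2, by omega⟩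
      · -- I → II
        obtain ⟨s1', c1, n1, g1, e1, hn1⟩ := ih1
        have g1' : GenF G.prods [] s1' c1 := g1
        obtain ⟨rfl, rfl⟩ := GenF_nil_inv g1'
        exact ⟨s2', c2, n1 + n2, g2, E_append e1 e2, by omega⟩
      · -- deletion rule
        obtain ⟨rfl, rfl⟩ := GenF_nil_inv h1
        refine ⟨x :: s2', 0 + 0 + c2, (0 + 1) + n2,
          GenF.nt (mem_prods_term hx) (GenF.term x GenF.nil) g2,
          E_append (E.insR x E.nil) e2, ?_⟩
        have hs : (⟨Sum.inl A, ([] : List ((N ⊕ Unit) ⊕ T)), 1⟩ :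
          ScoredProd (N ⊕ Unit) T).score = 1 := rfl
        omega

end LED
namespace LED

variable {N T : Type*} [DecidableEq T]

theorem main_iff (G : CNF N T) (s : List T) (A : N) (l : ℕ) :
    (∃ u ≤ l, G.augDerives (Sum.inl A) s u) ↔
      ∃ s', G.Derives A s' ∧ editDist s s' ≤ l := by
  constructor
  · rintro ⟨u, hu, hd⟩
    have g : GenF G.augProds [Sum.inl (Sum.inl A)] s u := SD_iff_genF.mp hd
    obtain ⟨s', c, n, g', e, hn⟩ := refl_sim g
    have g'' : GenF G.prods [Sum.inl A] s' c := g'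
    refine ⟨s', ⟨c, genF_toSD g''⟩, ?_⟩
    have hle : levenshtein Levenshtein.defaultCost s s' ≤ n := E_le_lev e
    calc editDist s s' ≤ n := hle
      _ ≤ u := hn
      _ ≤ l := hu
  · rintro ⟨s', ⟨c, hd⟩, hle⟩
    have g : GenF G.prods [Sum.inl A] s' c := SD_iff_genF.mp hd
    obtain ⟨u, hu, g'⟩ := sim_top g (E_of_lev s s')
    exact ⟨u, le_trans hu hle, SD_iff_genF.mpr g'⟩

end LED


/-- For every string `s ∈ Σ*`, every nonterminal `A` of `G`, and every
`l ≥ 0`: there is a derivation `A ⇒* s` in `G_e` of score at most `l` iff there is a string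
`s'` with `A ⇒* s'` in `G` and `d_ed(s, s') ≤ l`. Consequently, the minimum score of any
derivation `A ⇒* s` in `G_e` equals `min { d_ed(s, s') : A ⇒* s' in G }`, and when `A = S`
this minimum equals the language edit distance `d_G(G,s)`. -/
theorem augGrammar_score_iff_editDist {N T : Type*} [DecidableEq T]
    (G : CNF N T) (hne : G.lang.Nonempty) (s : List T) (A : N) :
    (∀ l : ℕ, (∃ u ≤ l, G.augDerives (Sum.inl A) s u) ↔
        ∃ s', G.Derives A s' ∧ editDist s s' ≤ l) ∧
    sInf {u | G.augDerives (Sum.inl A) s u} =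
      sInf {d | ∃ s', G.Derives A s' ∧ editDist s s' = d} ∧
    (A = G.start → sInf {u | G.augDerives (Sum.inl A) s u} = dG G s) := by
  have hiff := LED.main_iff G s A
  have hmain : sInf {u | G.augDerives (Sum.inl A) s u} =
      sInf {d | ∃ s', G.Derives A s' ∧ editDist s s' = d} := by
    set U := {u | G.augDerives (Sum.inl A) s u} with hUdef
    set D := {d | ∃ s', G.Derives A s' ∧ editDist s s' = d} with hDdef
    have h1 : ∀ u ∈ U, ∃ d ∈ D, d ≤ u := by
      intro u hu
      obtain ⟨s', hd, hle⟩ := (hiff u).mp ⟨u, le_refl u, hu⟩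
      exact ⟨editDist s s', ⟨s', hd, rfl⟩, hle⟩
    have h2 : ∀ d ∈ D, ∃ u ∈ U, u ≤ d := by
      intro d hd
      obtain ⟨s', hds, heq⟩ := hd
      obtain ⟨u, hu, hder⟩ := (hiff d).mpr ⟨s', hds, le_of_eq heq⟩
      exact ⟨u, hder, hu⟩
    rcases U.eq_empty_or_nonempty with hU | hU
    · rcases D.eq_empty_or_nonempty with hD | hD
      · rw [hU, hD]
      · exfalso
        obtain ⟨d, hd⟩ := hD
        obtain ⟨u, hu, -⟩ := h2 d hd
        rw [hU] at hu
        exact hu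
    · have hD : D.Nonempty := by
        obtain ⟨u, hu⟩ := hU
        obtain ⟨d, hd, -⟩ := h1 u hu
        exact ⟨d, hd⟩
      apply le_antisymm
      · obtain ⟨u, hu, hle⟩ := h2 _ (Nat.sInf_mem hD)
        exact le_trans (Nat.sInf_le hu) hle
      · obtain ⟨d, hd, hle⟩ := h1 _ (Nat.sInf_mem hU)
        exact le_trans (Nat.sInf_le hd) hle
  refine ⟨hiff, hmain, ?_⟩
  intro hA
  subst hA
  rw [hmain]
  rfl
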